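/- For z,w in the unit disk and a = (a_1,...,a_n) ∈ 𝔻^n pairwise distinct, the Schur-complement conditional kernel of the Szegő kernel K(z,w) = 1/(1-z·conj(w)) satisfies: det((K(a_j,a_k))_{j,k}) · K^{a_1,...,a_n}(z,w) = |V(a)|^2 · S(a,a) · ∏_{i=1}^n (z - a_i)(conj(w) - conj(a_i)) · K(z,w) · ∏_{i=1}^n K(z,a_i) K(a_i,w), where S(a,a) = ∏_{j,k}(1-a_j conj(a_k))^{-1} and V is the Vandermonde determinant. -/

import Mathlib

open Finset Complex

/-- Conditional (Schur complement) kernel: `K^a(z,w) = K(z,w) - K(z,a)K(a,w)/K(a,a)`. -/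
noncomputable def condKernel (K : ℂ → ℂ → ℂ) (a : ℂ) : ℂ → ℂ → ℂ :=
  fun z w => K z w - K z a * K a w / K a a

/-- Iterated conditional kernel `K^{a_0,…,a_{m-1}}`. -/
noncomputable def iterCondKernel (K : ℂ → ℂ → ℂ) (a : ℕ → ℂ) : ℕ → (ℂ → ℂ → ℂ)
  | 0 => K
  | m + 1 => condKernel (iterCondKernel K a m) (a m)

/-- The Szegő kernel of the unit disk. -/
noncomputable def szegoK (z w : ℂ) : ℂ := (1 - z * (starRingEnd ℂ) w)⁻¹

lemma one_sub_ne (z w : ℂ) (hz : ‖z‖ < 1) (hw : ‖w‖ < 1) :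
    1 - z * (starRingEnd ℂ) w ≠ 0 := by
  have : ‖z * (starRingEnd ℂ) w‖ < 1 := by
    rw [norm_mul, Complex.norm_conj]
    nlinarith [norm_nonneg z, norm_nonneg w]
  intro h
  rw [sub_eq_zero] at h
  rw [← h] at this
  simp at this

lemma szegoK_ne (z w : ℂ) (hz : ‖z‖ < 1) (hw : ‖w‖ < 1) :
    szegoK z w ≠ 0 := inv_ne_zero (one_sub_ne z w hz hw)

/-- single-step closed form -/
lemma condKernel_szego (a z w : ℂ) (ha : ‖a‖ < 1) (hz : ‖z‖ < 1)
    (hw : ‖w‖ < 1) :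
    condKernel szegoK a z w =
      (z - a) * ((starRingEnd ℂ) w - (starRingEnd ℂ) a) * szegoK z w * szegoK z a * szegoK a w := by
  have h1 := one_sub_ne z w hz hw
  have h2 := one_sub_ne z a hz ha
  have h3 := one_sub_ne a w ha hw
  have h4 := one_sub_ne a a ha ha
  simp only [condKernel, szegoK, div_inv_eq_mul]
  have hx := mul_inv_cancel₀ h1
  have hy := mul_inv_cancel₀ h2
  have hu := mul_inv_cancel₀ h3
  linear_combination (-(1 - z * (starRingEnd ℂ) w)⁻¹) * hy -
    (1 - z * (starRingEnd ℂ) w)⁻¹ * (1 - z * (starRingEnd ℂ) a) * (1 - z * (starRingEnd ℂ) a)⁻¹ * hu +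
    (1 - z * (starRingEnd ℂ) a)⁻¹ * (1 - a * (starRingEnd ℂ) w)⁻¹ * (1 - a * (starRingEnd ℂ) a) * hx

lemma iterA (a : ℕ → ℂ) (m : ℕ) (hd : ∀ i < m, ‖a i‖ < 1)
    (hi : ∀ i < m, ∀ j < m, a i = a j → i = j) :
    ∀ z w : ℂ, ‖z‖ < 1 → ‖w‖ < 1 →
    iterCondKernel szegoK a m z w =
      (∏ i ∈ range m, (z - a i) * ((starRingEnd ℂ) w - (starRingEnd ℂ) (a i))) *
        szegoK z w * ∏ i ∈ range m, szegoK z (a i) * szegoK (a i) w := by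
  induction m with
  | zero => intro z w hz hw; simp [iterCondKernel]
  | succ m IH =>
    intro z w hz hw
    have hd' : ∀ i < m, ‖a i‖ < 1 := fun i h => hd i (Nat.lt_succ_of_lt h)
    have hi' : ∀ i < m, ∀ j < m, a i = a j → i = j :=
      fun i h j h' => hi i (Nat.lt_succ_of_lt h) j (Nat.lt_succ_of_lt h')
    have ham : ‖a m‖ < 1 := hd m (Nat.lt_succ_self m)
    have IHzw := IH hd' hi' z w hz hw
    have IHza := IH hd' hi' z (a m) hz ham
    have IHaw := IH hd' hi' (a m) w ham hw
    have IHaa := IH hd' hi' (a m) (a m) ham ham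
    show condKernel (iterCondKernel szegoK a m) (a m) z w = _
    simp only [condKernel, IHzw, IHza, IHaw, IHaa]
    simp only [Finset.prod_mul_distrib, prod_range_succ]
    -- nonvanishing facts
    have hA3 : (∏ i ∈ range m, (a m - a i)) ≠ 0 := by
      apply Finset.prod_ne_zero_iff.mpr
      intro i hi2
      rw [mem_range] at hi2
      intro h
      have : a m = a i := by linear_combination h
      exact absurd (hi m (Nat.lt_succ_self m) i (Nat.lt_succ_of_lt hi2) this) (by omega)
    have hA4 : (∏ i ∈ range m, ((starRingEnd ℂ) (a m) - (starRingEnd ℂ) (a i))) ≠ 0 := by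
      apply Finset.prod_ne_zero_iff.mpr
      intro i hi2
      rw [mem_range] at hi2
      intro h
      rw [sub_eq_zero] at h
      have : a m = a i := (starRingEnd ℂ).injective h
      exact absurd (hi m (Nat.lt_succ_self m) i (Nat.lt_succ_of_lt hi2) this) (by omega)
    have hP3 : (∏ i ∈ range m, szegoK (a m) (a i)) ≠ 0 :=
      Finset.prod_ne_zero_iff.mpr fun i hi2 =>
        szegoK_ne _ _ ham (hd' i (mem_range.mp hi2))
    have hP4 : (∏ i ∈ range m, szegoK (a i) (a m)) ≠ 0 :=
      Finset.prod_ne_zero_iff.mpr fun i hi2 =>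
        szegoK_ne _ _ (hd' i (mem_range.mp hi2)) ham
    have hKaa : szegoK (a m) (a m) ≠ 0 := szegoK_ne _ _ ham ham
    have hstep : szegoK z w - szegoK z (a m) * szegoK (a m) w / szegoK (a m) (a m) =
        (z - a m) * ((starRingEnd ℂ) w - (starRingEnd ℂ) (a m)) * szegoK z w *
          szegoK z (a m) * szegoK (a m) w := condKernel_szego (a m) z w ham hz hw
    field_simp
    linear_combination (∏ i ∈ range m, (z - a i)) *
      (∏ i ∈ range m, ((starRingEnd ℂ) w - (starRingEnd ℂ) (a i))) *
      (∏ i ∈ range m, szegoK z (a i)) * (∏ i ∈ range m, szegoK (a i) w) *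
      szegoK (a m) (a m) * hstep +
      (∏ i ∈ range m, (z - a i)) *
      (∏ i ∈ range m, ((starRingEnd ℂ) w - (starRingEnd ℂ) (a i))) *
      (∏ i ∈ range m, szegoK z (a i)) * (∏ i ∈ range m, szegoK (a i) w) *
      szegoK z (a m) * szegoK (a m) w * mul_inv_cancel₀ hKaa

lemma gramB : ∀ (n : ℕ) (a : Fin n → ℂ), (∀ j, ‖a j‖ < 1) → Function.Injective a →
    Matrix.det (Matrix.of fun j k => szegoK (a j) (a k)) =
      (∏ j, ∏ k ∈ Ioi j, (a k - a j)) *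
        (∏ j, ∏ k ∈ Ioi j, ((starRingEnd ℂ) (a k) - (starRingEnd ℂ) (a j))) *
        ∏ j, ∏ k, szegoK (a j) (a k) := by
  intro n
  induction n with
  | zero => intro a _ _; simp [Matrix.det_fin_zero]
  | succ n IH =>
    intro a hd hinj
    have hK00 : szegoK (a 0) (a 0) ≠ 0 := szegoK_ne _ _ (hd 0) (hd 0)
    set B : Matrix (Fin (n+1)) (Fin (n+1)) ℂ :=
      Matrix.of (fun j k => if j = 0 then szegoK (a 0) (a k)
        else condKernel szegoK (a 0) (a j) (a k)) with hB
    have hdet1 : Matrix.det (Matrix.of fun j k => szegoK (a j) (a k)) = Matrix.det B := by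
      apply Matrix.det_eq_of_forall_row_eq_smul_add_const
        (fun j => if j = 0 then 0 else szegoK (a j) (a 0) / szegoK (a 0) (a 0)) 0 (by simp)
      intro i j
      by_cases h : i = 0
      · simp [hB, h]
      · simp only [hB, Matrix.of_apply, if_neg h, condKernel, reduceIte]
        ring
    have hBcol : ∀ i : Fin (n+1), i ≠ 0 → B i 0 = 0 := by
      intro i h
      simp only [hB, Matrix.of_apply, if_neg h, condKernel]
      rw [mul_div_assoc, div_self hK00, mul_one, sub_self]
    -- expansion along column 0
    rw [hdet1, Matrix.det_succ_column_zero, Finset.sum_eq_single 0 ?side1 ?side2]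
    case side1 => intro i _ h; rw [hBcol i h]; ring
    case side2 => intro h; exact absurd (Finset.mem_univ 0) h
    have hB00 : B 0 0 = szegoK (a 0) (a 0) := by simp [hB]
    set u : Fin n → ℂ := fun j => (a j.succ - a 0) * szegoK (a j.succ) (a 0) with hu
    set v : Fin n → ℂ := fun k =>
      ((starRingEnd ℂ) (a k.succ) - (starRingEnd ℂ) (a 0)) * szegoK (a 0) (a k.succ) with hv
    have hsub : B.submatrix ((0 : Fin (n+1)).succAbove) Fin.succ =
        Matrix.of (fun j k => u j *
          (Matrix.of (fun j k : Fin n => v k *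
            (Matrix.of fun j k : Fin n => szegoK (a j.succ) (a k.succ)) j k)) j k) := by
      ext j k
      simp only [Matrix.submatrix_apply, Fin.succAbove_zero, hB, Matrix.of_apply,
        if_neg (Fin.succ_ne_zero j), hu, hv]
      rw [condKernel_szego (a 0) (a j.succ) (a k.succ) (hd 0) (hd j.succ) (hd k.succ)]
      ring
    have hIH := IH (a ∘ Fin.succ) (fun j => hd j.succ) (hinj.comp (Fin.succ_injective n))
    simp only [Function.comp_apply, Function.comp] at hIH
    rw [hB00, hsub, Matrix.det_mul_column u, Matrix.det_mul_row v, hIH]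
    simp only [Fin.val_zero, pow_zero, one_mul]
    simp_rw [Fin.prod_univ_succ, Fin.prod_Ioi_zero, Fin.prod_Ioi_succ, hu, hv,
      Finset.prod_mul_distrib]
    ring

theorem szego_iterCondKernel_formula (n : ℕ) (a : Fin n → ℂ)
    (ha_disk : ∀ j, ‖a j‖ < 1) (ha_inj : Function.Injective a)
    (z w : ℂ) (hz : ‖z‖ < 1) (hw : ‖w‖ < 1) :
    Matrix.det (Matrix.of fun j k : Fin n => szegoK (a j) (a k)) *
      iterCondKernel szegoK (fun m => if h : m < n then a ⟨m, h⟩ else 0) n z w =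
    ((‖∏ j : Fin n, ∏ k ∈ univ.filter (fun k => j < k),
        (a k - a j)‖ ^ 2 : ℝ) : ℂ) *
      (∏ j : Fin n, ∏ k : Fin n, (1 - a j * (starRingEnd ℂ) (a k))⁻¹) *
      (∏ i : Fin n, (z - a i) * ((starRingEnd ℂ) w - (starRingEnd ℂ) (a i))) *
      szegoK z w *
      ∏ i : Fin n, szegoK z (a i) * szegoK (a i) w := by
  set a' : ℕ → ℂ := fun m => if h : m < n then a ⟨m, h⟩ else 0 with ha'
  have hd : ∀ i < n, ‖a' i‖ < 1 := by
    intro i h; simp only [ha', dif_pos h]; exact ha_disk _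
  have hi : ∀ i < n, ∀ j < n, a' i = a' j → i = j := by
    intro i h j h' he
    simp only [ha', dif_pos h, dif_pos h'] at he
    exact Fin.mk.inj_iff.mp (ha_inj he)
  have hIter := iterA a' n hd hi z w hz hw
  have hprod1 : (∏ i ∈ Finset.range n,
      ((z - a' i) * ((starRingEnd ℂ) w - (starRingEnd ℂ) (a' i)))) =
      ∏ i : Fin n, (z - a i) * ((starRingEnd ℂ) w - (starRingEnd ℂ) (a i)) := by
    rw [← Fin.prod_univ_eq_prod_range]
    exact Finset.prod_congr rfl fun i _ => by simp [ha', i.isLt]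
  have hprod2 : (∏ i ∈ Finset.range n, (szegoK z (a' i) * szegoK (a' i) w)) =
      ∏ i : Fin n, szegoK z (a i) * szegoK (a i) w := by
    rw [← Fin.prod_univ_eq_prod_range]
    exact Finset.prod_congr rfl fun i _ => by simp [ha', i.isLt]
  rw [hIter, hprod1, hprod2, gramB n a ha_disk ha_inj]
  have hfilter : ∀ j : Fin n, univ.filter (fun k => j < k) = Ioi j := by
    intro j; ext k; simp
  simp only [hfilter]
  set V : ℂ := ∏ j : Fin n, ∏ k ∈ Ioi j, (a k - a j) with hV
  have habs : ((‖V‖ ^ 2 : ℝ) : ℂ) = V * (starRingEnd ℂ) V := by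
    rw [Complex.sq_norm, Complex.mul_conj]
  have hconjV : (starRingEnd ℂ) V =
      ∏ j : Fin n, ∏ k ∈ Ioi j, ((starRingEnd ℂ) (a k) - (starRingEnd ℂ) (a j)) := by
    rw [hV, map_prod]
    refine Finset.prod_congr rfl fun j _ => ?_
    rw [map_prod]
    exact Finset.prod_congr rfl fun k _ => map_sub _ _ _
  have hS : (∏ j : Fin n, ∏ k : Fin n, (1 - a j * (starRingEnd ℂ) (a k))⁻¹) =
      ∏ j : Fin n, ∏ k : Fin n, szegoK (a j) (a k) := rfl
  rw [habs, hconjV, hS]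
  ring
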